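/- For any regular Gaussian distribution p with mean 0 that is Markovian with respect to an AMP CG G, and any connectivity component K of G: for all A, B ∈ K such that A − B is not an edge of G, the separation A ⊥_G B | (pa_G(K) ∪ K) \ {A, B} holds in the AMP interpretation of G. -/

import Mathlib

/- Mixed graphs with directed and undirected edges. -/
structure MixedGraph (γ : Type*) where
  dir : γ → γ → Prop
  undir : γ → γ → Prop
  undir_symm : ∀ a b, undir a b → undir b a

namespace MixedGraph

variable {β : Type*} (G : MixedGraph β)

/-- Two nodes are adjacent if joined by some edge. -/
def adj (a b : β) : Prop := G.dir a b ∨ G.dir b a ∨ G.undir a b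

/-- The graph is simple: no loops and at most one edge between any pair. -/
def Simple : Prop :=
  (∀ a, ¬ G.dir a a) ∧ (∀ a, ¬ G.undir a a) ∧
  (∀ a b, G.dir a b → ¬ G.dir b a) ∧ (∀ a b, G.dir a b → ¬ G.undir a b)

/-- A semidirected cycle: a cycle whose first edge is directed and whose other
edges are directed or undirected (all pointing forwards). -/
def HasSemidirectedCycle : Prop :=
  ∃ (n : ℕ) (f : Fin (n + 2) → β),
    f 0 = f (Fin.last (n + 1)) ∧ G.dir (f 0) (f 1) ∧
    ∀ i : Fin (n + 1), G.dir (f i.castSucc) (f i.succ) ∨ G.undir (f i.castSucc) (f i.succ)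

/-- A chain graph: a simple graph with no semidirected cycle. -/
def IsChainGraph : Prop := G.Simple ∧ ¬ G.HasSemidirectedCycle

/-- A DAG: a chain graph with no undirected edges. -/
def IsDAG : Prop := G.IsChainGraph ∧ ∀ a b, ¬ G.undir a b

/-- Parents of a set of nodes. -/
def pa (X : Set β) : Set β := {v | v ∉ X ∧ ∃ x ∈ X, G.dir v x}

/-- Strict ascendants of a set of nodes (strictly descending route to the set). -/
def san (W : Set β) : Set β := {v | v ∉ W ∧ ∃ w ∈ W, Relation.TransGen G.dir v w}

/-- B is a triplex node between A and C: A → B ← C, A → B − C, or A − B ← C. -/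
def triplex (A B C : β) : Prop :=
  (G.dir A B ∧ G.dir C B) ∨ (G.dir A B ∧ G.undir B C) ∨ (G.undir A B ∧ G.dir C B)

/-- B is a non-triplex node between A and C. -/
def nontriplex (A B C : β) : Prop :=
  G.adj A B ∧ G.adj B C ∧ ¬ G.triplex A B C

/-- A route: a nonempty sequence of consecutively adjacent nodes. -/
def IsRoute (l : List β) : Prop := l ≠ [] ∧ l.Chain' G.adj

/-- A path that is open given the determined set `D` (AMP path-based semantics). -/
def AMPOpenPath (D : Set β) (l : List β) : Prop :=
  G.IsRoute l ∧ l.Nodup ∧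
  (∀ A B C, [A, B, C] <:+: l → G.triplex A B C → B ∈ D ∪ G.san D) ∧
  (∀ A B C, [A, B, C] <:+: l → G.nontriplex A B C → B ∈ D →
    (G.undir A B ∧ G.undir B C ∧ ∃ p ∈ G.pa {B}, p ∉ D))

/-- A route that is open given the determined set `D` (AMP route-based semantics). -/
def AMPOpenRoute (D : Set β) (l : List β) : Prop :=
  G.IsRoute l ∧
  (∀ A B C, [A, B, C] <:+: l → G.triplex A B C → B ∈ D) ∧
  (∀ A B C, [A, B, C] <:+: l → G.nontriplex A B C → B ∉ D)

/-- AMP separation (path-based) of X and Y given determined set D. -/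
def AMPSep (D X Y : Set β) : Prop :=
  ∀ (l : List β) (x y : β), x ∈ X → y ∈ Y → l.head? = some x → l.getLast? = some y →
    ¬ G.AMPOpenPath D l

/-- AMP separation (route-based) of X and Y given determined set D. -/
def AMPSepRoute (D X Y : Set β) : Prop :=
  ∀ (l : List β) (x y : β), x ∈ X → y ∈ Y → l.head? = some x → l.getLast? = some y →
    ¬ G.AMPOpenRoute D l

/-- `s` is a collider section of the route `l`: a maximal undirected subroute of `l`
entered by arrowheads at both ends. -/
def IsColliderSection (l s : List β) : Prop :=
  s ≠ [] ∧ List.Chain' G.undir s ∧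
  ∃ pre post A C, l = pre ++ s ++ post ∧
    pre.getLast? = some A ∧ post.head? = some C ∧
    (∀ b, s.head? = some b → G.dir A b) ∧ (∀ b, s.getLast? = some b → G.dir C b) ∧
    (∀ a b, pre.getLast? = some a → s.head? = some b → ¬ G.undir a b) ∧
    (∀ a b, s.getLast? = some a → post.head? = some b → ¬ G.undir a b)

/-- `s` is a non-collider section of the route `l`: a maximal undirected subroute of `l`
not entered by arrowheads at both ends. -/
def IsNonColliderSection (l s : List β) : Prop :=
  s ≠ [] ∧ List.Chain' G.undir s ∧
  ∃ pre post, l = pre ++ s ++ post ∧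
    (∀ a b, pre.getLast? = some a → s.head? = some b → ¬ G.undir a b) ∧
    (∀ a b, s.getLast? = some a → post.head? = some b → ¬ G.undir a b) ∧
    ¬ ((∃ A, pre.getLast? = some A ∧ ∀ b, s.head? = some b → G.dir A b) ∧
       (∃ C, post.head? = some C ∧ ∀ b, s.getLast? = some b → G.dir C b))

/-- A route that is open given the determined set `D` (LWF semantics). -/
def LWFOpenRoute (D : Set β) (l : List β) : Prop :=
  G.IsRoute l ∧
  (∀ s, G.IsColliderSection l s → ∃ x ∈ s, x ∈ D) ∧
  (∀ s, G.IsNonColliderSection l s → ∀ x ∈ s, x ∉ D)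

/-- LWF separation of X and Y given determined set D. -/
def LWFSep (D X Y : Set β) : Prop :=
  ∀ (l : List β) (x y : β), x ∈ X → y ∈ Y → l.head? = some x → l.getLast? = some y →
    ¬ G.LWFOpenRoute D l

/-- Closure of Z under a set `det` of deterministic relationships: `(S, a) ∈ det`
means that `a` is a function of `S`. -/
inductive Determined (det : Set (Set β × β)) (Z : Set β) : β → Prop
  | base : ∀ a, a ∈ Z → Determined det Z a
  | step : ∀ (S : Set β) (a : β), (S, a) ∈ det → (∀ b ∈ S, Determined det Z b) →
      Determined det Z a

/-- The set D(Z) of nodes determined by Z. -/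
def DSet (det : Set (Set β × β)) (Z : Set β) : Set β := {a | Determined det Z a}

end MixedGraph

section EAMP

variable {α : Type*}

/-- Directed edges of the EAMP CG: `inl` nodes are the original nodes,
`inr` nodes are the error nodes. -/
def eampDir (G : MixedGraph α) : (α ⊕ α) → (α ⊕ α) → Prop
  | Sum.inl x, Sum.inl y => G.dir x y
  | Sum.inr x, Sum.inl y => x = y
  | _, _ => False

/-- Undirected edges of the EAMP CG: `ε^A − ε^B` for each `A − B` of G. -/
def eampUndir (G : MixedGraph α) : (α ⊕ α) → (α ⊕ α) → Prop
  | Sum.inr x, Sum.inr y => G.undir x y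
  | _, _ => False

/-- The EAMP CG G' of an AMP CG G: add `ε^A → A` for each node A and replace
each undirected edge `A − B` by `ε^A − ε^B`. -/
def eamp (G : MixedGraph α) : MixedGraph (α ⊕ α) where
  dir := eampDir G
  undir := eampUndir G
  undir_symm := by
    rintro (x | x) (y | y) h <;>
      simp only [eampUndir] at h ⊢ <;>
      first
        | exact h.elim
        | exact G.undir_symm _ _ h

/-- The parents of A in G, embedded as nodes of the EAMP CG. -/
def eampPa (G : MixedGraph α) (A : α) : Set (α ⊕ α) := {x | ∃ B, G.dir B A ∧ x = Sum.inl B}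

/-- The deterministic relationships of the EAMP CG: each A is a function of
`pa_G(A) ∪ {ε^A}`, and each `ε^A` is a function of `pa_G(A) ∪ {A}`. -/
def eampDet (G : MixedGraph α) : Set (Set (α ⊕ α) × (α ⊕ α)) :=
  {p | (∃ A, p = (eampPa G A ∪ {Sum.inr A}, Sum.inl A)) ∨
       (∃ A, p = (eampPa G A ∪ {Sum.inl A}, Sum.inr A))}

/-- Marginalize the node B out of G: add `A → C` for every pair `A → B`, `B → C`,
then delete B together with all edges it participates in. -/
def marg {β : Type*} (G : MixedGraph β) (B : β) : MixedGraph β where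
  dir a c := a ≠ B ∧ c ≠ B ∧ (G.dir a c ∨ (G.dir a B ∧ G.dir B c))
  undir a c := a ≠ B ∧ c ≠ B ∧ G.undir a c
  undir_symm := by
    rintro a c ⟨h1, h2, h3⟩
    exact ⟨h2, h1, G.undir_symm _ _ h3⟩

/-- Marginalize a list of nodes out of G, one at a time. -/
def margList {β : Type*} (G : MixedGraph β) (L : List β) : MixedGraph β := L.foldl marg G

/-- Directed edges of the DAG G'': those of G' among `V ∪ ε`, plus
`ε^A → S_{ε^Aε^B} ← ε^B` for each undirected edge `ε^A − ε^B` of G'. -/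
def dagDir (G : MixedGraph α) : ((α ⊕ α) ⊕ Sym2 α) → ((α ⊕ α) ⊕ Sym2 α) → Prop
  | Sum.inl x, Sum.inl y => (eamp G).dir x y
  | Sum.inl (Sum.inr x), Sum.inr s => ∃ y, G.undir x y ∧ s = s(x, y)
  | _, _ => False

/-- The DAG G'' obtained from G' by replacing each `ε^A − ε^B` with
`ε^A → S_{ε^Aε^B} ← ε^B`, where the selection nodes are fresh. -/
def dagOf (G : MixedGraph α) : MixedGraph ((α ⊕ α) ⊕ Sym2 α) where
  dir := dagDir G
  undir _ _ := False
  undir_symm := by intro a b h; exact h.elim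

/-- The set S of selection nodes of G''. -/
def selNodes (G : MixedGraph α) : Set ((α ⊕ α) ⊕ Sym2 α) :=
  {v | ∃ x y, G.undir x y ∧ v = Sum.inr s(x, y)}

/-- The deterministic relationships of G'' (the same as those of G'). -/
def dagDet (G : MixedGraph α) : Set (Set ((α ⊕ α) ⊕ Sym2 α) × ((α ⊕ α) ⊕ Sym2 α)) :=
  {p | ∃ q ∈ eampDet G, p = (Sum.inl '' q.1, Sum.inl q.2)}

/-- Structural characterization of EAMP CGs over `W ∪ ε`: a chain graph whose
undirected edges join only error nodes and whose error nodes have no incoming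
directed edges. -/
def IsEAMPStruct (G : MixedGraph (α ⊕ α)) : Prop :=
  G.IsChainGraph ∧
  (∀ a b, G.undir a b → (∃ x, a = Sum.inr x) ∧ ∃ y, b = Sum.inr y) ∧
  (∀ a x, ¬ G.dir a (Sum.inr x))

/-- K is a connectivity component: a maximal set connected by undirected paths. -/
def IsConnComp {β : Type*} (G : MixedGraph β) (K : Set β) : Prop :=
  ∃ a, K = {b | Relation.ReflTransGen G.undir a b}

end EAMP

namespace MixedGraph

variable {α : Type*} (G : MixedGraph α)

lemma chain'_getElem {R : α → α → Prop} {l : List α} (h : l.Chain' R) (i : ℕ)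
    (hi : i + 1 < l.length) : R l[i] l[i+1] := by
  exact List.isChain_iff_getElem.mp h i hi

lemma getElem_idx_congr {l : List α} {i j : ℕ} (e : i = j) (h : i < l.length) :
    l[i] = l[j]'(e ▸ h) := by subst e; rfl

lemma triple_infix (l : List α) (i : ℕ) (h : i + 2 < l.length) :
    [l[i], l[i+1], l[i+2]] <:+: l := by
  refine ⟨l.take i, l.drop (i+3), ?_⟩
  have h1 : l.drop i = l[i] :: l.drop (i+1) := List.drop_eq_getElem_cons (by omega)
  have h2 : l.drop (i+1) = l[i+1] :: l.drop (i+2) := List.drop_eq_getElem_cons (by omega)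
  have h3 : l.drop (i+2) = l[i+2] :: l.drop (i+3) := List.drop_eq_getElem_cons (by omega)
  have h0 : l.take i ++ l.drop i = l := List.take_append_drop i l
  rw [h1, h2, h3] at h0
  simpa using h0

lemma noCycleAux (hG : G.IsChainGraph) {a b : α} (hab : G.dir a b)
    (h : Relation.ReflTransGen (fun x y => G.dir x y ∨ G.undir x y) b a) : False := by
  obtain ⟨c, hchain, hlst⟩ := List.exists_isChain_cons_of_relationReflTransGen h
  apply hG.2
  set R := fun x y => G.dir x y ∨ G.undir x y with hR
  set L : List α := a :: b :: c with hL
  have hLlen : L.length = c.length + 2 := by simp [hL]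
  have hch' : L.Chain' R := List.IsChain.cons_cons (Or.inl hab) hchain
  refine ⟨c.length, fun i : Fin (c.length + 2) => L[(i:ℕ)]'(by have := i.isLt; omega), ?_, ?_, ?_⟩
  · show L[((0 : Fin (c.length+2)) : ℕ)]'_ = L[((Fin.last (c.length+1)) : ℕ)]'_
    have hgl0 : L.getLast (by simp [hL]) = a :=
      (List.getLast_cons (by simp)).trans hlst
    rw [List.getLast_eq_getElem] at hgl0
    simp only [Fin.val_zero, Fin.val_last]
    rw [getElem_idx_congr (show c.length + 1 = L.length - 1 by omega)]
    rw [hgl0]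
    simp [hL]
  · show G.dir (L[((0 : Fin (c.length+2)) : ℕ)]'_) (L[((1 : Fin (c.length+2)) : ℕ)]'_)
    have h0 : ((0 : Fin (c.length+2)) : ℕ) = 0 := rfl
    have h1 : ((1 : Fin (c.length+2)) : ℕ) = 1 := rfl
    simp only [h0, h1]
    simpa [hL] using hab
  · intro i
    have hiv : (i.castSucc : ℕ) = (i : ℕ) := rfl
    have hiv' : (i.succ : ℕ) = (i : ℕ) + 1 := rfl
    simp only [hiv, hiv']
    exact chain'_getElem hch' i (by have := i.isLt; omega)


lemma connComp_rtg {K : Set α} (hK : IsConnComp G K) {p v : α} (hp : p ∈ K) (hv : v ∈ K) :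
    Relation.ReflTransGen G.undir p v := by
  obtain ⟨a, rfl⟩ := hK
  exact (Relation.ReflTransGen.mono (fun x y h => G.undir_symm y x h) _ _ (Relation.reflTransGen_swap.mpr hp)).trans hv

lemma no_dir_within (hG : G.IsChainGraph) {K : Set α} (hK : IsConnComp G K)
    {p v : α} (hp : p ∈ K) (hv : v ∈ K) : ¬ G.dir p v := fun hd =>
  G.noCycleAux hG hd (Relation.ReflTransGen.mono (fun _ _ h => Or.inr h) _ _ (G.connComp_rtg hK hv hp))

lemma undir_mem_comp {K : Set α} (hK : IsConnComp G K) {x y : α} (hx : x ∈ K)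
    (hxy : G.undir x y) : y ∈ K := by
  obtain ⟨a, rfl⟩ := hK
  exact Relation.ReflTransGen.tail hx hxy

lemma parent_mem_D (hG : G.IsChainGraph) {K : Set α} (hK : IsConnComp G K)
    {A B : α} (hA : A ∈ K) (hB : B ∈ K) {v p : α} (hv : v ∈ K) (hp : G.dir p v) :
    p ∈ (G.pa K ∪ K) \ {A, B} := by
  have hpK : p ∉ K := fun h => G.no_dir_within hG hK h hv hp
  refine ⟨Or.inl ⟨hpK, v, hv, hp⟩, ?_⟩
  intro h
  simp only [Set.mem_insert_iff, Set.mem_singleton_iff] at h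
  rcases h with rfl | rfl
  · exact hpK hA
  · exact hpK hB

lemma adj_symm {a b : α} (h : G.adj a b) : G.adj b a := by
  rcases h with h|h|h
  · exact Or.inr (Or.inl h)
  · exact Or.inl h
  · exact Or.inr (Or.inr (G.undir_symm _ _ h))

lemma triplex_symm {X Y Z : α} (h : G.triplex X Y Z) : G.triplex Z Y X := by
  rcases h with ⟨h1,h2⟩|⟨h1,h2⟩|⟨h1,h2⟩
  · exact Or.inl ⟨h2, h1⟩
  · exact Or.inr (Or.inr ⟨G.undir_symm _ _ h2, h1⟩)
  · exact Or.inr (Or.inl ⟨h2, G.undir_symm _ _ h1⟩)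

lemma openPath_reverse {D : Set α} {l : List α} (h : G.AMPOpenPath D l) :
    G.AMPOpenPath D l.reverse := by
  obtain ⟨⟨hne, hch⟩, hnd, ht, hnt⟩ := h
  refine ⟨⟨by simpa using hne, ?_⟩, by simpa using hnd, ?_, ?_⟩
  · refine List.isChain_reverse.mpr ?_
    exact hch.imp fun a b hab => G.adj_symm hab
  · intro X Y Z hinf htr
    have hinf' : [Z, Y, X] <:+: l := by
      rw [← List.reverse_infix]; simpa using hinf
    exact ht Z Y X hinf' (G.triplex_symm htr)
  · intro X Y Z hinf hntr hY
    have hinf' : [Z, Y, X] <:+: l := by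
      rw [← List.reverse_infix]; simpa using hinf
    have hn' : G.nontriplex Z Y X :=
      ⟨G.adj_symm hntr.2.1, G.adj_symm hntr.1, fun c => hntr.2.2 (G.triplex_symm c)⟩
    obtain ⟨h1, h2, hp⟩ := hnt Z Y X hinf' hn' hY
    exact ⟨G.undir_symm _ _ h2, G.undir_symm _ _ h1, hp⟩

lemma head_getElem {l : List α} {A : α} (h : l.head? = some A) :
    ∃ (hl : 0 < l.length), l[0] = A := by
  cases l with
  | nil => simp at h
  | cons a t => exact ⟨by simp, by simpa using h⟩

lemma last_getElem {l : List α} {B : α} (h : l.getLast? = some B) :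
    ∃ (hl : 0 < l.length), l[l.length - 1] = B := by
  have hne : l ≠ [] := by rintro rfl; simp at h
  refine ⟨List.length_pos_iff_ne_nil.mpr hne, ?_⟩
  rw [List.getLast?_eq_getLast hne] at h
  rw [← List.getLast_eq_getElem hne]
  exact Option.some_injective _ h


/-- Core of "Lemma P": no directed edge of an open path points into a node of `K`.
`t` is the position of the source `w = l[t]`, `k` the position of the target `v`. -/
lemma lemPcore (hG : G.IsChainGraph) {K : Set α} (hK : IsConnComp G K)
    {A B : α} (hA : A ∈ K) (hB : B ∈ K)
    {l : List α} (hop : G.AMPOpenPath ((G.pa K ∪ K) \ {A, B}) l)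
    (hhead : l.head? = some A) (hlast : l.getLast? = some B)
    {t k : ℕ} (ht : t < l.length) (hk : k < l.length)
    (hd : G.dir l[t] (l[k]'hk)) (hvK : l[k]'hk ∈ K)
    (hadj : k + 1 = t ∨ t + 1 = k) : False := by
  obtain ⟨⟨hlne, hch⟩, hnd, htc, hntc⟩ := hop
  obtain ⟨h0, hl0⟩ := head_getElem hhead
  obtain ⟨h0', hlB⟩ := last_getElem hlast
  -- w = l[t] is not in K
  have hwK : l[t] ∉ K := fun h => G.no_dir_within hG hK h hvK hd
  -- w is internal
  have htne0 : t ≠ 0 := by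
    rintro rfl
    exact hwK (hl0 ▸ hA)
  have htnelast : t ≠ l.length - 1 := by
    intro h
    apply hwK
    have : l[t] = B := by rw [getElem_idx_congr h]; exact hlB
    exact this ▸ hB
  obtain ⟨s, rfl⟩ : ∃ s, t = s + 1 := ⟨t - 1, by omega⟩
  have hs2 : s + 2 < l.length := by omega
  -- the middle node l[s+1] is in D
  have hwD : l[s+1] ∈ (G.pa K ∪ K) \ {A, B} := G.parent_mem_D hG hK hA hB hvK hd
  -- adjacency along the path
  have ha1 : G.adj l[s] l[s+1] := chain'_getElem hch s (by omega)
  have ha2 : G.adj l[s+1] l[s+2] := chain'_getElem hch (s+1) (by omega)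
  -- the middle node is a nontriplex node
  have hknd : k = s ∨ k = s + 2 := by omega
  have hnt : G.nontriplex l[s] l[s+1] l[s+2] := by
    refine ⟨ha1, ha2, ?_⟩
    rcases hknd with rfl | rfl
    · -- edge l[s+1] → l[s]
      rintro (⟨c1, _⟩ | ⟨c1, _⟩ | ⟨c1, _⟩)
      · exact hG.1.2.2.1 _ _ hd c1
      · exact hG.1.2.2.1 _ _ hd c1
      · exact hG.1.2.2.2 _ _ hd (G.undir_symm _ _ c1)
    · -- edge l[s+1] → l[s+2]
      rintro (⟨_, c2⟩ | ⟨_, c2⟩ | ⟨_, c2⟩)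
      · exact hG.1.2.2.1 _ _ hd c2
      · exact hG.1.2.2.2 _ _ hd c2
      · exact hG.1.2.2.1 _ _ hd c2
  obtain ⟨hu1, hu2, -⟩ := hntc _ _ _ (triple_infix l s hs2) hnt hwD
  rcases hknd with rfl | rfl
  · exact hG.1.2.2.2 _ _ hd (G.undir_symm _ _ hu1)
  · exact hG.1.2.2.2 _ _ hd hu2


/-- The first edge of an open path between `A` and `B` must point out of `A`. -/
lemma firstEdge (hG : G.IsChainGraph) {K : Set α} (hK : IsConnComp G K)
    {A B : α} (hA : A ∈ K) (hB : B ∈ K) (hAB : A ≠ B) (hne : ¬ G.undir A B)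
    {l : List α} (hop : G.AMPOpenPath ((G.pa K ∪ K) \ {A, B}) l)
    (hhead : l.head? = some A) (hlast : l.getLast? = some B)
    (h2 : 1 < l.length) : G.dir A l[1] := by
  obtain ⟨h0, hl0⟩ := head_getElem hhead
  obtain ⟨h0', hlB⟩ := last_getElem hlast
  have hch := hop.1.2
  have hnd := hop.2.1
  have hntc := hop.2.2.2
  have hl0K : l[0] ∈ K := by rw [hl0]; exact hA
  have ha1 : G.adj l[0] l[1] := chain'_getElem hch 0 h2
  rcases ha1 with h | h | h
  · exact hl0 ▸ h
  · -- edge l[1] → l[0] = A points into K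
    exact (G.lemPcore hG hK hA hB hop hhead hlast (t := 1) (k := 0) h2 (by omega)
      h hl0K (Or.inl rfl)).elim
  · -- undirected first edge
    exfalso
    have hvK : l[1] ∈ K := G.undir_mem_comp hK hl0K h
    have hne1B : l[1] ≠ B := fun e => hne (by rw [← hl0, ← e]; exact h)
    have hne1A : l[1] ≠ A := by
      rw [← hl0]
      intro e
      have := (hnd.getElem_inj_iff (hi := h2) (hj := h0)).mp e
      omega
    have hs2 : 2 < l.length := by
      have hne1 : (1:ℕ) ≠ l.length - 1 := fun e => hne1B (by
        rw [getElem_idx_congr e]; exact hlB)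
      omega
    have hvD : l[1] ∈ (G.pa K ∪ K) \ {A, B} := by
      refine ⟨Or.inr hvK, ?_⟩
      simp only [Set.mem_insert_iff, Set.mem_singleton_iff]
      rintro (e | e)
      · exact hne1A e
      · exact hne1B e
    have ha2 : G.adj l[1] l[2] := chain'_getElem hch 1 hs2
    rcases ha2 with h2d | h2d | h2d
    · -- l[1] → l[2]
      have hnt : G.nontriplex l[0] l[1] l[2] :=
        ⟨Or.inr (Or.inr h), Or.inl h2d, by
          rintro (⟨c1, -⟩ | ⟨c1, -⟩ | ⟨-, c2⟩)
          · exact hG.1.2.2.2 _ _ c1 h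
          · exact hG.1.2.2.2 _ _ c1 h
          · exact hG.1.2.2.1 _ _ h2d c2⟩
      obtain ⟨-, hu, -⟩ := hntc _ _ _ (triple_infix l 0 hs2) hnt hvD
      exact hG.1.2.2.2 _ _ h2d hu
    · -- l[2] → l[1] points into K
      exact G.lemPcore hG hK hA hB hop hhead hlast (t := 2) (k := 1) hs2 h2
        h2d hvK (Or.inl rfl)
    · -- l[1] − l[2]
      have hnt : G.nontriplex l[0] l[1] l[2] :=
        ⟨Or.inr (Or.inr h), Or.inr (Or.inr h2d), by
          rintro (⟨c1, -⟩ | ⟨c1, -⟩ | ⟨-, c2⟩)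
          · exact hG.1.2.2.2 _ _ c1 h
          · exact hG.1.2.2.2 _ _ c1 h
          · exact hG.1.2.2.2 _ _ c2 (G.undir_symm _ _ h2d)⟩
      obtain ⟨-, -, p, hp, hpD⟩ := hntc _ _ _ (triple_infix l 0 hs2) hnt hvD
      obtain ⟨-, x, hx, hdir⟩ := hp
      rw [Set.mem_singleton_iff] at hx
      subst hx
      exact hpD (G.parent_mem_D hG hK hA hB hvK hdir)

end MixedGraph
/-- for any connectivity component K of an AMP CG G and any
`A, B ∈ K` not joined by an undirected edge,
`A ⊥_G B | (pa_G(K) ∪ K) \ {A, B}` in the AMP interpretation of G. -/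
theorem stmt17 {α : Type*} (G : MixedGraph α) (hG : G.IsChainGraph)
    (K : Set α) (hK : IsConnComp G K)
    (A B : α) (hA : A ∈ K) (hB : B ∈ K) (hAB : A ≠ B) (hne : ¬ G.undir A B) :
    G.AMPSep ((G.pa K ∪ K) \ {A, B}) {A} {B} := by
  classical
  intro l x y hx hy hhead hlast hop
  rw [Set.mem_singleton_iff] at hx hy
  rw [hx] at hhead
  rw [hy] at hlast
  obtain ⟨h0, hl0⟩ := MixedGraph.head_getElem hhead
  obtain ⟨h0', hlB⟩ := MixedGraph.last_getElem hlast
  have h2 : 1 < l.length := by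
    by_contra hc
    apply hAB
    have e : l[0] = B := by
      rw [MixedGraph.getElem_idx_congr (show (0:ℕ) = l.length - 1 by omega)]
      exact hlB
    exact hl0.symm.trans e
  have hd1 : G.dir A l[1] := G.firstEdge hG hK hA hB hAB hne hop hhead hlast h2
  -- the last edge points out of B, via the reversed path
  have hop2 : G.AMPOpenPath ((G.pa K ∪ K) \ {B, A}) l.reverse := by
    rw [Set.pair_comm B A]
    exact G.openPath_reverse hop
  have h2' : 1 < l.reverse.length := by simpa using h2
  have hd2' : G.dir B (l.reverse[1]'h2') :=
    G.firstEdge hG hK hB hA hAB.symm (fun u => hne (G.undir_symm _ _ u)) hop2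
      (by rw [List.head?_reverse]; exact hlast)
      (by rw [List.getLast?_reverse]; exact hhead) h2'
  have hd2 : G.dir B (l[l.length - 2]'(by omega)) := by
    have e := List.getElem_reverse (l := l) (i := 1) h2'
    rw [e] at hd2'
    rw [MixedGraph.getElem_idx_congr (show l.length - 2 = l.length - 1 - 1 by omega)]
    exact hd2'
  by_cases hlen2 : l.length = 2
  · have e1 : l[1] = B := by
      rw [MixedGraph.getElem_idx_congr (show (1:ℕ) = l.length - 1 by omega)]
      exact hlB
    have e2 : l[l.length - 2]'(by omega) = A := by
      rw [MixedGraph.getElem_idx_congr (show l.length - 2 = 0 by omega)]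
      exact hl0
    rw [e1] at hd1
    rw [e2] at hd2
    exact hG.1.2.2.1 _ _ hd1 hd2
  · have hlen3 : 2 < l.length := by omega
    have hW : ¬ ∃ (h : l.length - 2 + 1 < l.length),
        G.dir (l[l.length - 2]'(Nat.lt_of_succ_lt h)) (l[l.length - 2 + 1]'h) := by
      rintro ⟨hh, hdir⟩
      have e : l[l.length - 2 + 1]'hh = l[l.length - 1]'(by omega) :=
        MixedGraph.getElem_idx_congr (by omega) hh
      rw [e, hlB] at hdir
      exact hG.1.2.2.1 _ _ hdir hd2
    have hPe : ∃ j, ¬ ∃ (h : j + 1 < l.length),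
        G.dir (l[j]'(Nat.lt_of_succ_lt h)) (l[j+1]'h) := ⟨l.length - 2, hW⟩
    have hi0 : Nat.find hPe ≠ 0 := by
      intro e
      apply Nat.find_spec hPe
      rw [e]
      exact ⟨h2, by rw [hl0]; exact hd1⟩
    obtain ⟨s, hs⟩ : ∃ s, Nat.find hPe = s + 1 := ⟨Nat.find hPe - 1, by omega⟩
    have hile : s + 1 ≤ l.length - 2 := hs ▸ Nat.find_le hW
    have hs2 : s + 2 < l.length := by omega
    have hPi : ¬ ∃ (h : s + 1 + 1 < l.length),
        G.dir (l[s+1]'(Nat.lt_of_succ_lt h)) (l[s+1+1]'h) := hs ▸ Nat.find_spec hPe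
    have hF : ∀ j (hj : j < s + 1), G.dir (l[j]'(by omega)) (l[j+1]'(by omega)) := by
      intro j hj
      have hj' : j < Nat.find hPe := by omega
      obtain ⟨hh, hd⟩ := not_not.mp (Nat.find_min hPe hj')
      exact hd
    have hndi : ¬ G.dir (l[s+1]'(by omega)) (l[s+2]'(by omega)) := fun hd =>
      hPi ⟨hs2, hd⟩
    have hadji : G.adj (l[s+1]'(by omega)) (l[s+2]'(by omega)) :=
      MixedGraph.chain'_getElem hop.1.2 (s+1) hs2
    have hdprev : G.dir (l[s]'(by omega)) (l[s+1]'(by omega)) := hF s (by omega)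
    have htpx : G.triplex (l[s]'(by omega)) (l[s+1]'(by omega)) (l[s+2]'(by omega)) := by
      rcases hadji with hd | hd | hd
      · exact absurd hd hndi
      · exact Or.inl ⟨hdprev, hd⟩
      · exact Or.inr (Or.inl ⟨hdprev, hd⟩)
    have hmem := hop.2.2.1 _ _ _ (MixedGraph.triple_infix l s hs2) htpx
    have hyK : (l[s+1]'(by omega)) ∉ K := fun hk =>
      G.lemPcore hG hK hA hB hop hhead hlast (t := s) (k := s+1) (by omega) (by omega)
        hdprev hk (Or.inr rfl)
    obtain ⟨kk, hkK, htg⟩ : ∃ kk ∈ K, Relation.TransGen G.dir (l[s+1]'(by omega)) kk := by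
      rcases hmem with hD | hsan
      · rcases hD.1 with hpa | hKk
        · obtain ⟨-, kk, hkk, hdk⟩ := hpa
          exact ⟨kk, hkk, Relation.TransGen.single hdk⟩
        · exact absurd hKk hyK
      · obtain ⟨-, d, hd, htg⟩ := hsan
        rcases hd.1 with hpa | hKk
        · obtain ⟨-, kk, hkk, hdk⟩ := hpa
          exact ⟨kk, hkk, htg.tail hdk⟩
        · exact ⟨d, hKk, htg⟩
    have steps : ∀ j, 1 ≤ j → ∀ (hj : j ≤ s + 1),
        Relation.ReflTransGen G.dir (l[1]'h2) (l[j]'(by omega)) := by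
      intro j
      induction j with
      | zero => intro h1 hj; omega
      | succ j ih =>
        intro h1 hj
        rcases Nat.eq_or_lt_of_le h1 with e | hlt
        · have hj0 : j = 0 := by omega
          subst hj0
          exact Relation.ReflTransGen.refl
        · exact (ih (by omega) (by omega)).tail (hF j (by omega))
    have hrtg : Relation.ReflTransGen (fun x y => G.dir x y ∨ G.undir x y) (l[1]'h2) A :=
      ((Relation.ReflTransGen.mono (fun _ _ h => Or.inl h) _ _ (steps (s+1) (by omega) le_rfl)).trans
        (Relation.ReflTransGen.mono (fun _ _ h => Or.inl h) _ _ (htg.to_reflTransGen))).trans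
        (Relation.ReflTransGen.mono (fun _ _ h => Or.inr h) _ _ (G.connComp_rtg hK hkK hA))
    exact G.noCycleAux hG hd1 hrtg
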